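/- Discrete Hardy inequality: let r > 0, z > 1 and x_k > 0 for k ∈ ℕ. Then there exists a constant C = C(r, z) such that ∑_{k=0}^∞ z^k (∑_{m=k}^∞ x_m)^r ≤ C ∑_{k=0}^∞ z^k x_k^r, whenever the right-hand side is finite. -/

import Mathlib

open scoped ENNReal

private lemma hardy_rpow_tsum_le (f : ℕ → ℝ≥0∞) {p : ℝ} (hp : 0 < p) (hp1 : p ≤ 1) :
    (∑' n, f n) ^ p ≤ ∑' n, (f n) ^ p := by
  have hfin : ∀ s : Finset ℕ, (∑ i ∈ s, f i) ^ p ≤ ∑ i ∈ s, (f i) ^ p := by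
    intro s
    induction s using Finset.cons_induction with
    | empty => simp [ENNReal.zero_rpow_of_pos hp]
    | cons a s ha ih =>
        rw [Finset.sum_cons, Finset.sum_cons]
        exact le_trans (ENNReal.rpow_add_le_add_rpow _ _ hp.le hp1) (add_le_add le_rfl ih)
  have htend : Filter.Tendsto (fun n => (∑ i ∈ Finset.range n, f i) ^ p) Filter.atTop
      (nhds ((∑' n, f n) ^ p)) :=
    (ENNReal.continuous_rpow_const.tendsto _).comp (ENNReal.tendsto_nat_tsum f)
  exact le_of_tendsto' htend fun n => le_trans (hfin _) (ENNReal.sum_le_tsum _)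

private lemma hardy_key (z : ℝ≥0∞) (hz0 : z ≠ 0) (hzt : z ≠ ⊤) (c : ℕ → ℝ≥0∞) (x : ℕ → ℝ≥0∞)
    (r : ℝ)
    (h : ∀ k, (∑' m, x (k + m)) ^ r ≤ ∑' m, c m * (x (k + m)) ^ r) :
    ∑' k : ℕ, z ^ k * (∑' m : ℕ, x (k + m)) ^ r ≤
      (∑' m : ℕ, c m * (z⁻¹) ^ m) * ∑' k : ℕ, z ^ k * (x k) ^ r := by
  have hzinv : ∀ m k : ℕ, z ^ k = z⁻¹ ^ m * z ^ (m + k) := by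
    intro m k
    rw [pow_add, ← mul_assoc, ← mul_pow, ENNReal.inv_mul_cancel hz0 hzt, one_pow, one_mul]
  calc ∑' k : ℕ, z ^ k * (∑' m : ℕ, x (k + m)) ^ r
      ≤ ∑' k : ℕ, z ^ k * ∑' m, c m * (x (k + m)) ^ r :=
        ENNReal.tsum_le_tsum fun k => mul_le_mul' le_rfl (h k)
    _ = ∑' k : ℕ, ∑' m, z ^ k * (c m * (x (k + m)) ^ r) := by
        simp_rw [ENNReal.tsum_mul_left]
    _ = ∑' m : ℕ, ∑' k, z ^ k * (c m * (x (k + m)) ^ r) := ENNReal.tsum_comm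
    _ = ∑' m : ℕ, c m * z⁻¹ ^ m * ∑' k, z ^ (m + k) * (x (m + k)) ^ r := by
        refine tsum_congr fun m => ?_
        rw [← ENNReal.tsum_mul_left]
        refine tsum_congr fun k => ?_
        rw [hzinv m k, add_comm k m]
        ring
    _ ≤ ∑' m : ℕ, c m * z⁻¹ ^ m * ∑' n, z ^ n * (x n) ^ r := by
        refine ENNReal.tsum_le_tsum fun m => mul_le_mul' le_rfl ?_
        exact ENNReal.tsum_comp_le_tsum_of_injective (add_right_injective m)
          (fun n => z ^ n * (x n) ^ r)
    _ = (∑' m : ℕ, c m * (z⁻¹) ^ m) * ∑' k : ℕ, z ^ k * (x k) ^ r := ENNReal.tsum_mul_right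

/-- Discrete Hardy inequality: for `r > 0` and `z > 1` there is a constant
`C = C(r,z)` such that for every positive sequence `x`,
`∑_k z^k (∑_{m=k}^∞ x_m)^r ≤ C ∑_k z^k x_k^r`. -/
theorem discrete_hardy (r : ℝ) (z : ℝ≥0∞) (hr : 0 < r) (hz : 1 < z) (hz' : z ≠ ⊤) :
    ∃ C : ℝ≥0∞, C ≠ ⊤ ∧ ∀ x : ℕ → ℝ≥0∞, (∀ k, 0 < x k) →
      ∑' k : ℕ, z ^ k * (∑' m : ℕ, x (k + m)) ^ r ≤ C * ∑' k : ℕ, z ^ k * (x k) ^ r := by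
  have hz0 : z ≠ 0 := (zero_lt_one.trans hz).ne'
  rcases le_or_gt r 1 with hr1 | hr1
  · -- case r ≤ 1 : subadditivity of rpow
    refine ⟨(1 - z⁻¹)⁻¹, ?_, ?_⟩
    · rw [Ne, ENNReal.inv_eq_top]
      exact (tsub_pos_of_lt (ENNReal.inv_lt_one.2 hz)).ne'
    · intro x hx
      have key := hardy_key z hz0 hz' (fun _ => 1) x r (fun k => by
        simpa using hardy_rpow_tsum_le (fun m => x (k + m)) hr hr1)
      simpa [ENNReal.tsum_geometric] using key
  · -- case r > 1 : Hölder's inequality with geometric weights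
    have hcs : r.HolderConjugate r.conjExponent := Real.HolderConjugate.conjExponent hr1
    set s := r.conjExponent with hs_def
    have hs0 : 0 < s := hcs.symm.pos
    have h2r : (0:ℝ) < 2 * r := by positivity
    have hexp : (-(2*r)⁻¹ : ℝ) < 0 := neg_lt_zero.2 (inv_pos.2 h2r)
    set w : ℝ≥0∞ := z ^ (-(2*r)⁻¹ : ℝ) with hw_def
    have hw1 : w < 1 := ENNReal.rpow_lt_one_of_one_lt_of_neg hz hexp
    have hw0 : w ≠ 0 := (ENNReal.rpow_pos (zero_lt_one.trans hz) hz').ne'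
    have hwt : w ≠ ⊤ := (hw1.trans ENNReal.one_lt_top).ne
    set u : ℝ≥0∞ := z ^ ((2:ℝ)⁻¹) with hu_def
    have hwinv : w⁻¹ = z ^ ((2*r:ℝ)⁻¹) := by
      rw [hw_def, ENNReal.rpow_neg, inv_inv]
    have hwu : w⁻¹ ^ r = u := by
      rw [hwinv, ← ENNReal.rpow_mul, hu_def, mul_inv, mul_assoc, inv_mul_cancel₀ hr.ne',
        mul_one]
    have hu_lt : u < z := by
      conv_rhs => rw [← ENNReal.rpow_one z]
      exact ENNReal.rpow_lt_rpow_of_exponent_lt hz hz' (by norm_num)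
    have hρ : u * z⁻¹ < 1 := by
      have := ENNReal.mul_lt_mul_left (ENNReal.inv_ne_zero.2 hz')
        (ENNReal.inv_ne_top.2 hz0) hu_lt
      rwa [ENNReal.mul_inv_cancel hz0 hz'] at this
    set A : ℝ≥0∞ := (∑' m : ℕ, (w ^ m) ^ s) ^ (1/s) with hA_def
    have hAsum : (∑' m : ℕ, (w ^ m) ^ s) = (1 - w ^ s)⁻¹ := by
      rw [← ENNReal.tsum_geometric]
      refine tsum_congr fun m => ?_
      rw [← ENNReal.rpow_natCast w m, ← ENNReal.rpow_mul, mul_comm (m:ℝ) s, ENNReal.rpow_mul,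
        ENNReal.rpow_natCast]
    have hAt : A ≠ ⊤ := by
      refine ENNReal.rpow_ne_top_of_nonneg (by positivity) ?_
      rw [hAsum, Ne, ENNReal.inv_eq_top]
      exact (tsub_pos_of_lt (ENNReal.rpow_lt_one hw1 hs0)).ne'
    have hArt : A ^ r ≠ ⊤ := ENNReal.rpow_ne_top_of_nonneg hr.le hAt
    refine ⟨A ^ r * (1 - u * z⁻¹)⁻¹, ?_, ?_⟩
    · exact ENNReal.mul_ne_top hArt (by
        rw [Ne, ENNReal.inv_eq_top]; exact (tsub_pos_of_lt hρ).ne')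
    · intro x hx
      have holder : ∀ k, (∑' m, x (k + m)) ^ r ≤
          ∑' m : ℕ, (A ^ r * u ^ m) * (x (k + m)) ^ r := by
        intro k
        have hle : (∑' m : ℕ, x (k + m)) ≤
            A * (∑' m : ℕ, (x (k + m) * w⁻¹ ^ m) ^ r) ^ (1/r) := by
          have H := ENNReal.lintegral_mul_le_Lp_mul_Lq
            (MeasureTheory.Measure.count : MeasureTheory.Measure ℕ) hcs.symm
            (f := fun m => w ^ m) (g := fun m => x (k + m) * w⁻¹ ^ m)
            (measurable_from_top).aemeasurable (measurable_from_top).aemeasurable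
          rw [MeasureTheory.lintegral_count, MeasureTheory.lintegral_count,
            MeasureTheory.lintegral_count] at H
          refine le_trans (le_of_eq ?_) H
          refine tsum_congr fun m => ?_
          simp only [Pi.mul_apply]
          rw [mul_comm (x (k + m)) _, ← mul_assoc, ← mul_pow,
            ENNReal.mul_inv_cancel hw0 hwt, one_pow, one_mul]
        have h2 := ENNReal.rpow_le_rpow hle hr.le
        rw [ENNReal.mul_rpow_of_nonneg _ _ hr.le,
          show ((∑' m : ℕ, (x (k + m) * w⁻¹ ^ m) ^ r) ^ (1/r)) ^ r
              = ∑' m : ℕ, (x (k + m) * w⁻¹ ^ m) ^ r from by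
            rw [← ENNReal.rpow_mul, one_div, inv_mul_cancel₀ hr.ne', ENNReal.rpow_one]] at h2
        have hterm : ∀ m : ℕ, ((w⁻¹ : ℝ≥0∞) ^ m) ^ r = u ^ m := by
          intro m
          rw [← ENNReal.rpow_natCast w⁻¹ m, ← ENNReal.rpow_mul, mul_comm (m:ℝ) r,
            ENNReal.rpow_mul, hwu, ENNReal.rpow_natCast]
        refine h2.trans_eq ?_
        rw [← ENNReal.tsum_mul_left]
        refine tsum_congr fun m => ?_
        rw [ENNReal.mul_rpow_of_nonneg _ _ hr.le, hterm m]
        ring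
      have key := hardy_key z hz0 hz' (fun m => A ^ r * u ^ m) x r holder
      refine le_trans key (le_of_eq ?_)
      congr 1
      calc ∑' m : ℕ, (A ^ r * u ^ m) * z⁻¹ ^ m
          = A ^ r * ∑' m : ℕ, (u * z⁻¹) ^ m := by
            rw [← ENNReal.tsum_mul_left]
            exact tsum_congr fun m => by rw [mul_pow]; ring
        _ = A ^ r * (1 - u * z⁻¹)⁻¹ := by rw [ENNReal.tsum_geometric]
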